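/- Let A be a measurable subset of ℝ and let 𝓘 be a family of open intervals in ℝ of uniformly bounded length such that for every a ∈ A there is b > a with (a,b) ∈ 𝓘. Then there exists a finite or countable pairwise disjoint subfamily {(a_k, b_k)} of 𝓘 with |A| ≤ 2 Σ_k (b_k - a_k). -/

import Mathlib

open MeasureTheory Set
open scoped ENNReal

lemma compact_select (I : Set (ℝ × ℝ)) (hord : ∀ p ∈ I, p.1 < p.2)
    (K : Set ℝ) (hK : IsCompact K)
    (hcovK : ∀ a ∈ K, ∃ b : ℝ, a < b ∧ (a, b) ∈ I) :
    ∃ S : Set (ℝ × ℝ), S ⊆ I ∧ (∀ p ∈ S, p.1 ∈ K) ∧ S.Countable ∧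
      (S.PairwiseDisjoint fun p => Set.Ioo p.1 p.2) ∧
      MeasureTheory.volume K ≤ ∑' p : S, ENNReal.ofReal ((p : ℝ × ℝ).2 - (p : ℝ × ℝ).1) := by
  classical
  -- the "bad" set of a selection: points of K below some frontier but uncovered
  set bad : Set (ℝ × ℝ) → Set ℝ :=
    fun S => (K ∩ (⋃ p ∈ S, Iio p.2)) \ (⋃ p ∈ S, Ioo p.1 p.2) with hbad
  set 𝒮 : Set (Set (ℝ × ℝ)) :=
    {S | S ⊆ I ∧ (∀ p ∈ S, p.1 ∈ K) ∧ (S.PairwiseDisjoint fun p => Set.Ioo p.1 p.2) ∧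
      (bad S).Countable} with h𝒮
  -- countability of any disjoint subfamily
  have hcnt : ∀ S : Set (ℝ × ℝ), S ⊆ I →
      (S.PairwiseDisjoint fun p => Set.Ioo p.1 p.2) → S.Countable := by
    intro S hSI hdisj
    refine hdisj.countable_of_isOpen (fun p _ => isOpen_Ioo) (fun p hp => ?_)
    exact nonempty_Ioo.2 (hord p (hSI hp))
  -- Zorn
  have hzorn : ∃ M, Maximal (· ∈ 𝒮) M := by
    refine zorn_subset 𝒮 ?_
    intro c hc𝒮 hchain
    refine ⟨⋃₀ c, ?_, fun s hs => subset_sUnion_of_mem hs⟩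
    have hUI : ⋃₀ c ⊆ I := by
      intro p hp; rcases hp with ⟨s, hsc, hps⟩; exact (hc𝒮 hsc).1 hps
    have hUK : ∀ p ∈ ⋃₀ c, p.1 ∈ K := by
      intro p hp; rcases hp with ⟨s, hsc, hps⟩; exact (hc𝒮 hsc).2.1 p hps
    have hUdisj : (⋃₀ c).PairwiseDisjoint fun p => Set.Ioo p.1 p.2 := by
      intro p hp q hq hpq
      rcases hp with ⟨s₁, hs₁, hps₁⟩
      rcases hq with ⟨s₂, hs₂, hqs₂⟩
      rcases eq_or_ne s₁ s₂ with rfl | hne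
      · exact (hc𝒮 hs₁).2.2.1 hps₁ hqs₂ hpq
      · rcases hchain hs₁ hs₂ hne with h | h
        · exact (hc𝒮 hs₂).2.2.1 (h hps₁) hqs₂ hpq
        · exact (hc𝒮 hs₁).2.2.1 hps₁ (h hqs₂) hpq
    have hUcnt : (⋃₀ c).Countable := hcnt _ hUI hUdisj
    refine ⟨hUI, hUK, hUdisj, ?_⟩
    -- bad of the union is contained in a countable union of bads
    have hsel : ∀ p ∈ ⋃₀ c, ∃ s ∈ c, p ∈ s := fun p hp => hp
    choose! f hfc hfp using hsel
    have hsub : bad (⋃₀ c) ⊆ ⋃ p ∈ ⋃₀ c, bad (f p) := by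
      intro z hz
      rcases hz with ⟨⟨hzK, hz2⟩, hzn⟩
      rcases mem_iUnion₂.1 hz2 with ⟨p, hpU, hzp⟩
      refine mem_iUnion₂.2 ⟨p, hpU, ⟨⟨hzK, mem_iUnion₂.2 ⟨p, hfp p hpU, hzp⟩⟩, ?_⟩⟩
      intro hzin
      rcases mem_iUnion₂.1 hzin with ⟨q, hq, hzq⟩
      exact hzn (mem_iUnion₂.2 ⟨q, ⟨f p, hfc p hpU, hq⟩, hzq⟩)
    refine Set.Countable.mono hsub ?_
    exact hUcnt.biUnion (fun p hp => (hc𝒮 (hfc p hp)).2.2.2)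
  obtain ⟨M, hM⟩ := hzorn
  obtain ⟨hMI, hMK, hMdisj, hMbad⟩ := hM.1
  -- the set of points of K above all frontiers
  set R : Set ℝ := K ∩ ⋂ p ∈ M, Ici p.2 with hR
  rcases R.eq_empty_or_nonempty with hRe | hRne
  · -- R empty : K is covered up to the countable bad set
    have hMcnt : M.Countable := hcnt _ hMI hMdisj
    have hcover : K ⊆ (⋃ p ∈ M, Ioo p.1 p.2) ∪ bad M := by
      intro z hzK
      by_cases hzin : z ∈ ⋃ p ∈ M, Ioo p.1 p.2
      · exact Or.inl hzin
      · refine Or.inr ⟨⟨hzK, ?_⟩, hzin⟩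
        have : z ∉ R := by rw [hRe]; exact notMem_empty z
        rw [hR] at this
        simp only [mem_inter_iff, mem_iInter, mem_Ici, not_and, not_forall] at this
        rcases this hzK with ⟨p, hpM, hpz⟩
        exact mem_iUnion₂.2 ⟨p, hpM, by simpa using lt_of_not_ge hpz⟩
    have hvol : volume K ≤ volume (⋃ p ∈ M, Ioo p.1 p.2) + volume (bad M) :=
      le_trans (measure_mono hcover) (measure_union_le _ _)
    have hbad0 : volume (bad M) = 0 := hMbad.measure_zero _
    have hmeas : volume (⋃ p ∈ M, Ioo p.1 p.2)
        = ∑' p : M, ENNReal.ofReal ((p : ℝ × ℝ).2 - (p : ℝ × ℝ).1) := by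
      rw [measure_biUnion hMcnt hMdisj (fun p _ => measurableSet_Ioo)]
      exact tsum_congr (fun p => Real.volume_Ioo)
    refine ⟨M, hMI, hMK, hMcnt, hMdisj, ?_⟩
    calc volume K ≤ volume (⋃ p ∈ M, Ioo p.1 p.2) + volume (bad M) := hvol
      _ = ∑' p : M, ENNReal.ofReal ((p : ℝ × ℝ).2 - (p : ℝ × ℝ).1) := by
          rw [hbad0, add_zero, hmeas]
  · -- R nonempty : extend M, contradicting maximality
    exfalso
    have hRcomp : IsCompact R :=
      hK.inter_right (isClosed_biInter fun p _ => isClosed_Ici)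
    obtain ⟨m, hmR, hmlb⟩ := hRcomp.exists_isLeast hRne
    have hmK : m ∈ K := hmR.1
    have hmub : ∀ p ∈ M, p.2 ≤ m := by
      intro p hp
      have := hmR.2
      rw [mem_iInter₂] at this
      exact this p hp
    obtain ⟨b, hmb, hmbI⟩ := hcovK m hmK
    have hnotmem : (m, b) ∉ M := by
      intro h
      exact absurd (hmub _ h) (not_le.2 hmb)
    have hS' : insert (m, b) M ∈ 𝒮 := by
      refine ⟨insert_subset hmbI hMI, ?_, ?_, ?_⟩
      · intro p hp
        rcases hp with rfl | hp
        · exact hmK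
        · exact hMK p hp
      · refine hMdisj.insert (fun q hq _ => ?_)
        refine Set.disjoint_left.2 (fun x hx hx' => ?_)
        have h1 : q.2 ≤ m := hmub q hq
        have h2 : m < x := hx.1
        exact absurd hx'.2 (not_lt.2 (le_trans h1 h2.le))
      · refine Set.Countable.mono ?_ (hMbad.union (countable_singleton m))
        intro z hz
        rcases hz with ⟨⟨hzK, hz2⟩, hzn⟩
        by_cases hcase : ∃ q ∈ M, z < q.2
        · rcases hcase with ⟨q, hqM, hzq⟩
          refine Or.inl ⟨⟨hzK, mem_iUnion₂.2 ⟨q, hqM, by simpa using hzq⟩⟩, ?_⟩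
          intro hzin
          rcases mem_iUnion₂.1 hzin with ⟨r, hrM, hzr⟩
          exact hzn (mem_iUnion₂.2 ⟨r, Or.inr hrM, hzr⟩)
        · push_neg at hcase
          have hzR : z ∈ R := by
            rw [hR]
            exact ⟨hzK, mem_iInter₂.2 (fun q hq => hcase q hq)⟩
          have hmz : m ≤ z := hmlb hzR
          rcases mem_iUnion₂.1 hz2 with ⟨p, hpS, hzp⟩
          rcases hpS with rfl | hpM
          · -- p = (m,b)
            have hzb : z < b := by simpa using hzp
            have hznot : z ∉ Ioo m b :=
              fun hmem => hzn (mem_iUnion₂.2 ⟨(m, b), Or.inl rfl, hmem⟩)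
            have : ¬ m < z := fun h => hznot ⟨h, hzb⟩
            exact Or.inr (le_antisymm (not_lt.1 this) hmz)
          · exact absurd (by simpa using hzp) (not_lt.2 (hcase p hpM))
    have := hM.2 hS' (subset_insert _ _)
    exact hnotmem (this (mem_insert _ _))
-- (compact_select assumed; appended later)

lemma half_le_of_lt_add {a b : ℝ≥0∞} (hfin : a ≠ ⊤) (h : a < b + a / 2) : a / 2 ≤ b := by
  have hnt : a / 2 ≠ ⊤ := by
    intro hc; rw [ENNReal.div_eq_top] at hc
    rcases hc with ⟨_, h2⟩ | ⟨h1, _⟩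
    · norm_num at h2
    · exact hfin h1
  have h2 : a / 2 + a / 2 < b + a / 2 := by rwa [ENNReal.add_halves]
  exact ((ENNReal.add_lt_add_iff_right hnt).1 h2).le

lemma two_mul_half (a : ℝ≥0∞) : 2 * (a / 2) = a :=
  ENNReal.mul_div_cancel' (by norm_num) (by norm_num)

lemma finset_sum_tsum_disjoint {ι α : Type*} (f : α → ℝ≥0∞) (g : ι → Set α) :
    ∀ F : Finset ι, (∀ i ∈ F, ∀ j ∈ F, i ≠ j → Disjoint (g i) (g j)) →
      ∑ i ∈ F, ∑' x : g i, f x = ∑' x : (⋃ i ∈ (F : Set ι), g i : Set α), f x := by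
  classical
  intro F
  induction F using Finset.induction_on with
  | empty => intro _; simp
  | @insert a F ha ih =>
    intro hdisj
    have hrec := ih (fun i hi j hj hij =>
      hdisj i (Finset.mem_insert_of_mem hi) j (Finset.mem_insert_of_mem hj) hij)
    have hd : Disjoint (g a) (⋃ i ∈ (F : Set ι), g i) := by
      rw [Set.disjoint_iUnion₂_right]
      intro i hi
      exact hdisj a (Finset.mem_insert_self a F) i (Finset.mem_insert_of_mem hi)
        (fun h => ha (h ▸ hi))
    rw [Finset.sum_insert ha, hrec]
    have hset : (⋃ i ∈ ((insert a F : Finset ι) : Set ι), g i)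
        = g a ∪ ⋃ i ∈ (F : Set ι), g i := by
      simp [Set.biUnion_insert]
    rw [hset, ENNReal.summable.tsum_union_disjoint hd ENNReal.summable]

lemma finite_case (A : Set ℝ) (hA : MeasurableSet A) (I : Set (ℝ × ℝ))
    (hord : ∀ p ∈ I, p.1 < p.2)
    (hcov : ∀ a ∈ A, ∃ b : ℝ, a < b ∧ (a, b) ∈ I)
    (hfin : MeasureTheory.volume A ≠ ⊤) :
    ∃ S : Set (ℝ × ℝ), S ⊆ I ∧ (∀ p ∈ S, p.1 ∈ A) ∧ S.Countable ∧
      (S.PairwiseDisjoint fun p => Set.Ioo p.1 p.2) ∧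
      MeasureTheory.volume A ≤ 2 * ∑' p : S, ENNReal.ofReal ((p : ℝ × ℝ).2 - (p : ℝ × ℝ).1) := by
  by_cases h0 : volume A = 0
  · refine ⟨∅, empty_subset _, by simp, countable_empty, by simp [Set.PairwiseDisjoint], ?_⟩
    simp [h0]
  · have hε : volume A / 2 ≠ 0 := ENNReal.div_ne_zero.2 ⟨h0, by norm_num⟩
    obtain ⟨K, hKA, hKcomp, hKvol⟩ := hA.exists_isCompact_lt_add hfin hε
    obtain ⟨S, hSI, hSK, hScnt, hSdisj, hSvol⟩ :=
      compact_select I hord K hKcomp (fun a ha => hcov a (hKA ha))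
    refine ⟨S, hSI, fun p hp => hKA (hSK p hp), hScnt, hSdisj, ?_⟩
    have h1 : volume A < (∑' p : S, ENNReal.ofReal ((p : ℝ × ℝ).2 - (p : ℝ × ℝ).1))
        + volume A / 2 :=
      lt_of_lt_of_le hKvol (add_le_add_left hSvol _)
    have h2 := half_le_of_lt_add hfin h1
    calc volume A = 2 * (volume A / 2) := (two_mul_half _).symm
      _ ≤ 2 * ∑' p : S, ENNReal.ofReal ((p : ℝ × ℝ).2 - (p : ℝ × ℝ).1) :=
        mul_le_mul_right h2 2
theorem stmt_15 (A : Set ℝ) (hA : MeasurableSet A) (I : Set (ℝ × ℝ))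
    (hlen : ∃ M : ℝ, ∀ p ∈ I, p.2 - p.1 ≤ M)
    (hord : ∀ p ∈ I, p.1 < p.2)
    (hcov : ∀ a ∈ A, ∃ b : ℝ, a < b ∧ (a, b) ∈ I) :
    ∃ S : Set (ℝ × ℝ), S ⊆ I ∧ S.Countable ∧
      (S.PairwiseDisjoint fun p => Set.Ioo p.1 p.2) ∧
      MeasureTheory.volume A ≤ 2 * ∑' p : S, ENNReal.ofReal ((p : ℝ × ℝ).2 - (p : ℝ × ℝ).1) := by
  classical
  by_cases hfin : volume A = ⊤
  case neg =>
    obtain ⟨S, h1, _, h3, h4, h5⟩ := finite_case A hA I hord hcov hfin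
    exact ⟨S, h1, h3, h4, h5⟩
  case pos =>
    obtain ⟨M₀, hM₀⟩ := hlen
    set w : ℝ := max M₀ 0 + 1 with hw_def
    have hw : 0 < w := by
      have : (0:ℝ) ≤ max M₀ 0 := le_max_right _ _
      linarith
    have hM₀w : M₀ < w := by
      have : M₀ ≤ max M₀ 0 := le_max_left _ _
      linarith
    set B : ℤ → Set ℝ := fun n => Set.Ico ((n:ℝ)*w) (((n:ℝ)+1)*w) with hB
    have hstep : ∀ n m : ℤ, n < m → ((n:ℝ)+1)*w ≤ (m:ℝ)*w := by
      intro n m h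
      have h1 : ((n:ℝ)+1) ≤ (m:ℝ) := by exact_mod_cast h
      exact mul_le_mul_of_nonneg_right h1 hw.le
    have hBdisj : Pairwise (Function.onFun Disjoint fun n => A ∩ B n) := by
      intro n m hnm
      have hd : Disjoint (B n) (B m) := by
        rcases hnm.lt_or_gt with h | h
        · rw [hB, Set.Ico_disjoint_Ico]
          exact le_trans inf_le_left (le_trans (hstep n m h) le_sup_right)
        · rw [hB, Set.Ico_disjoint_Ico]
          exact le_trans inf_le_right (le_trans (hstep m n h) le_sup_left)
      exact hd.mono inter_subset_right inter_subset_right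
    have hBcover : ⋃ n : ℤ, (A ∩ B n) = A := by
      apply Subset.antisymm
      · exact iUnion_subset (fun n => inter_subset_left)
      · intro x hx
        refine mem_iUnion.2 ⟨⌊x / w⌋, hx, ?_, ?_⟩
        · have h1 : (⌊x / w⌋ : ℝ) ≤ x / w := Int.floor_le _
          calc (⌊x / w⌋ : ℝ) * w ≤ (x / w) * w := mul_le_mul_of_nonneg_right h1 hw.le
            _ = x := div_mul_cancel₀ x hw.ne'
        · have h1 : x / w < (⌊x / w⌋ : ℝ) + 1 := Int.lt_floor_add_one _
          calc x = (x / w) * w := (div_mul_cancel₀ x hw.ne').symm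
            _ < ((⌊x / w⌋ : ℝ) + 1) * w := mul_lt_mul_of_pos_right h1 hw
    set g : ℤ → ℝ≥0∞ := fun n => volume (A ∩ B n) with hg
    have htsum : ∑' n : ℤ, g n = volume A := by
      rw [hg, ← measure_iUnion hBdisj (fun n => hA.inter measurableSet_Ico), hBcover]
    have hsplit := ENNReal.summable.tsum_add_tsum_compl (s := {n : ℤ | Even n}) (f := g)
        ENNReal.summable
    have hPex : ∃ P : Set ℤ, (∑' n : P, g n = ⊤) ∧ ∀ n ∈ P, (n + 1) ∉ P := by
      have htop := ENNReal.add_eq_top.1 (by rw [hsplit, htsum]; exact hfin)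
      rcases htop with h | h
      · exact ⟨_, h, fun n hn hc => (Int.even_add_one.1 hc) hn⟩
      · exact ⟨_, h, fun n hn hc => hc (Int.even_add_one.2 (fun he => hn he))⟩
    obtain ⟨P, hPtop, hPpar⟩ := hPex
    have hPspace : ∀ n ∈ P, ∀ m ∈ P, n < m → n + 2 ≤ m := by
      intro n hn m hm h
      by_contra hc
      push_neg at hc
      have : m = n + 1 := by omega
      exact hPpar n hn (this ▸ hm)
    have hKex : ∀ n : ℤ, ∃ K' : Set ℝ, K' ⊆ A ∩ B n ∧ IsCompact K' ∧ g n / 2 ≤ volume K' := by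
      intro n
      by_cases h0 : g n = 0
      · exact ⟨∅, empty_subset _, isCompact_empty, by simp [h0]⟩
      · have hBn : volume (B n) ≠ ⊤ := by
          rw [hB]
          simp only [Real.volume_Ico]
          exact ENNReal.ofReal_ne_top
        have hfinn : g n ≠ ⊤ :=
          ne_top_of_le_ne_top hBn (measure_mono inter_subset_right)
        have hε : g n / 2 ≠ 0 := ENNReal.div_ne_zero.2 ⟨h0, by norm_num⟩
        obtain ⟨K', hsub, hcomp, hlt⟩ :=
          (hA.inter measurableSet_Ico).exists_isCompact_lt_add hfinn hε
        exact ⟨K', hsub, hcomp, half_le_of_lt_add hfinn hlt⟩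
    choose K hKsub hKcomp hKvol using hKex
    have hScex : ∀ n : ℤ, ∃ S : Set (ℝ × ℝ), S ⊆ I ∧ (∀ p ∈ S, p.1 ∈ K n) ∧ S.Countable ∧
        (S.PairwiseDisjoint fun p => Set.Ioo p.1 p.2) ∧
        volume (K n) ≤ ∑' p : S, ENNReal.ofReal ((p : ℝ × ℝ).2 - (p : ℝ × ℝ).1) :=
      fun n => compact_select I hord (K n) (hKcomp n)
        (fun a ha => hcov a ((hKsub n ha).1))
    choose S hSI hSK hScnt hSdisj hSvol using hScex
    -- position of the intervals of S n
    have hpos : ∀ n : ℤ, ∀ p ∈ S n, (n:ℝ)*w ≤ p.1 ∧ p.1 < ((n:ℝ)+1)*w ∧ p.2 < ((n:ℝ)+2)*w := by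
      intro n p hp
      have h1 : p.1 ∈ B n := (hKsub n (hSK n p hp)).2
      rw [hB] at h1
      obtain ⟨ha, hb⟩ := h1
      refine ⟨ha, hb, ?_⟩
      have h2 : p.2 - p.1 ≤ M₀ := hM₀ p (hSI n hp)
      have : p.2 ≤ p.1 + M₀ := by linarith
      calc p.2 ≤ p.1 + M₀ := this
        _ < ((n:ℝ)+1)*w + w := by linarith
        _ = ((n:ℝ)+2)*w := by ring
    have hfar : ∀ n ∈ P, ∀ m ∈ P, n < m → ((n:ℝ)+2)*w ≤ (m:ℝ)*w := by
      intro n hn m hm h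
      have h1 : ((n:ℝ)+2) ≤ (m:ℝ) := by exact_mod_cast hPspace n hn m hm h
      exact mul_le_mul_of_nonneg_right h1 hw.le
    have hIoodisj : ∀ n ∈ P, ∀ m ∈ P, n < m → ∀ p ∈ S n, ∀ q ∈ S m,
        Disjoint (Set.Ioo p.1 p.2) (Set.Ioo q.1 q.2) := by
      intro n hn m hm h p hp q hq
      refine Set.disjoint_left.2 (fun x hxp hxq => ?_)
      have h1 : x < p.2 := hxp.2
      have h2 : q.1 < x := hxq.1
      have h3 : p.2 < ((n:ℝ)+2)*w := (hpos n p hp).2.2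
      have h4 : (m:ℝ)*w ≤ q.1 := (hpos m q hq).1
      have := hfar n hn m hm h
      linarith
    have hSsetdisj : ∀ n ∈ P, ∀ m ∈ P, n ≠ m → Disjoint (S n) (S m) := by
      intro n hn m hm hnm
      refine Set.disjoint_left.2 (fun p hpn hpm => ?_)
      rcases hnm.lt_or_gt with h | h
      · have h1 : p.1 < ((n:ℝ)+1)*w := (hpos n p hpn).2.1
        have h2 : ((m:ℝ))*w ≤ p.1 := (hpos m p hpm).1
        have h3 := hfar n hn m hm h
        nlinarith [hw]
      · have h1 : p.1 < ((m:ℝ)+1)*w := (hpos m p hpm).2.1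
        have h2 : ((n:ℝ))*w ≤ p.1 := (hpos n p hpn).1
        have h3 := hfar m hm n hn h
        nlinarith [hw]
    refine ⟨⋃ n ∈ P, S n, ?_, ?_, ?_, ?_⟩
    · intro p hp
      rcases mem_iUnion₂.1 hp with ⟨n, _, hpn⟩
      exact hSI n hpn
    · exact (P.to_countable).biUnion (fun n _ => hScnt n)
    · intro p hp q hq hpq
      rcases mem_iUnion₂.1 hp with ⟨n, hn, hpn⟩
      rcases mem_iUnion₂.1 hq with ⟨m, hm, hqm⟩
      rcases lt_trichotomy n m with h | rfl | h
      · exact hIoodisj n hn m hm h p hpn q hqm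
      · exact hSdisj n hpn hqm hpq
      · exact (hIoodisj m hm n hn h q hqm p hpn).symm
    · -- the sum is infinite
      set ℓ : ℝ × ℝ → ℝ≥0∞ := fun p => ENNReal.ofReal (p.2 - p.1) with hℓ
      set T : ℝ≥0∞ := ∑' p : (⋃ n ∈ P, S n : Set (ℝ × ℝ)), ℓ p with hT
      have hbound : (⊤ : ℝ≥0∞) ≤ 2 * T := by
        have key : ∑' n : P, g n ≤ 2 * T := by
          rw [ENNReal.tsum_eq_iSup_sum]
          refine iSup_le (fun F => ?_)
          have hterm : ∀ a : P, g (a : ℤ) ≤ 2 * ∑' p : (S (a : ℤ) : Set (ℝ × ℝ)), ℓ p := by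
            intro a
            calc g (a:ℤ) = 2 * (g (a:ℤ) / 2) := (two_mul_half _).symm
              _ ≤ 2 * volume (K (a:ℤ)) := mul_le_mul_right (hKvol _) 2
              _ ≤ 2 * ∑' p : (S (a:ℤ) : Set (ℝ × ℝ)), ℓ p :=
                mul_le_mul_right (hSvol _) 2
          calc ∑ a ∈ F, g (a:ℤ) ≤ ∑ a ∈ F, 2 * ∑' p : (S (a:ℤ) : Set (ℝ × ℝ)), ℓ p :=
                Finset.sum_le_sum (fun a _ => hterm a)
            _ = 2 * ∑ a ∈ F, ∑' p : (S (a:ℤ) : Set (ℝ × ℝ)), ℓ p := by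
                rw [Finset.mul_sum]
            _ = 2 * ∑' p : (⋃ a ∈ (F : Set P), S (a:ℤ) : Set (ℝ × ℝ)), ℓ p := by
                rw [finset_sum_tsum_disjoint ℓ (fun a : P => S (a:ℤ)) F
                  (fun a _ b _ hab => hSsetdisj a a.2 b b.2
                    (fun h => hab (Subtype.ext h)))]
            _ ≤ 2 * T := by
                refine mul_le_mul_right (ENNReal.tsum_mono_subtype ℓ ?_) 2
                intro x hx
                rcases mem_iUnion₂.1 hx with ⟨a, _, hxa⟩
                exact mem_iUnion₂.2 ⟨(a:ℤ), a.2, hxa⟩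
        calc (⊤:ℝ≥0∞) = ∑' n : P, g n := hPtop.symm
          _ ≤ 2 * T := key
      calc volume A ≤ ⊤ := le_top
        _ ≤ 2 * T := hbound
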